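/- Let n ≥ 1, let u be a C¹ real-valued function on ℝⁿ, let V be a C¹ vector field on ℝⁿ, and let Y be a C¹ vector field on ℝⁿ with compact support. Then ∫ e^{2u} Σᵢ,ⱼ (S(Y)ᵢⱼ + (1/2)(div Y)δᵢⱼ) Yᵢ Vⱼ dx = −(1/2) ∫ e^{2u} ( Σᵢ,ⱼ Yᵢ Yⱼ ∂ᵢVⱼ + (1/2)(div V)|Y|² + ⟨∇u, V⟩|Y|² + 2⟨∇u, Y⟩⟨V, Y⟩ ) dx. -/

import Mathlib

open MeasureTheory Real

/-- The `i`-th partial derivative of a function on `ℝⁿ`. -/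
noncomputable def pd (n : ℕ) (f : EuclideanSpace ℝ (Fin n) → ℝ)
    (i : Fin n) (x : EuclideanSpace ℝ (Fin n)) : ℝ :=
  fderiv ℝ f x (EuclideanSpace.single i 1)

/-- The squared Euclidean norm of the gradient, `|∇f|² = Σᵢ (∂ᵢf)²`. -/
noncomputable def gradSq (n : ℕ) (f : EuclideanSpace ℝ (Fin n) → ℝ)
    (x : EuclideanSpace ℝ (Fin n)) : ℝ :=
  ∑ i, (pd n f i x) ^ 2

/-- The Euclidean Laplacian, `Δf = Σᵢ ∂ᵢ²f`. -/
noncomputable def lap (n : ℕ) (f : EuclideanSpace ℝ (Fin n) → ℝ)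
    (x : EuclideanSpace ℝ (Fin n)) : ℝ :=
  ∑ i, pd n (pd n f i) i x

/-- The partial derivative `∂ᵢYⱼ` of a vector field `Y` on `ℝⁿ`. -/
noncomputable def vpd (n : ℕ)
    (Y : EuclideanSpace ℝ (Fin n) → EuclideanSpace ℝ (Fin n))
    (i j : Fin n) (x : EuclideanSpace ℝ (Fin n)) : ℝ :=
  fderiv ℝ (fun y => Y y j) x (EuclideanSpace.single i 1)

/-- The symmetrized gradient `S(Y)ᵢⱼ = (∂ᵢYⱼ + ∂ⱼYᵢ)/2` of a vector field. -/
noncomputable def symGrad (n : ℕ)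
    (Y : EuclideanSpace ℝ (Fin n) → EuclideanSpace ℝ (Fin n))
    (i j : Fin n) (x : EuclideanSpace ℝ (Fin n)) : ℝ :=
  (vpd n Y i j x + vpd n Y j i x) / 2

/-- The divergence `div Y = Σᵢ ∂ᵢYᵢ` of a vector field on `ℝⁿ`. -/
noncomputable def diverg (n : ℕ)
    (Y : EuclideanSpace ℝ (Fin n) → EuclideanSpace ℝ (Fin n))
    (x : EuclideanSpace ℝ (Fin n)) : ℝ :=
  ∑ i, vpd n Y i i x

namespace KillingAux

variable {n : ℕ}

lemma pd_mul {f g : EuclideanSpace ℝ (Fin n) → ℝ} (hf : Differentiable ℝ f)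
    (hg : Differentiable ℝ g) (i : Fin n) (x : EuclideanSpace ℝ (Fin n)) :
    pd n (fun y => f y * g y) i x = pd n f i x * g x + f x * pd n g i x := by
  simp only [pd, fderiv_fun_mul (hf x) (hg x), ContinuousLinearMap.add_apply,
    ContinuousLinearMap.smul_apply, smul_eq_mul]
  ring

lemma pd_add {f g : EuclideanSpace ℝ (Fin n) → ℝ} (hf : Differentiable ℝ f)
    (hg : Differentiable ℝ g) (i : Fin n) (x : EuclideanSpace ℝ (Fin n)) :
    pd n (fun y => f y + g y) i x = pd n f i x + pd n g i x := by
  simp only [pd, fderiv_fun_add (hf x) (hg x), ContinuousLinearMap.add_apply]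

lemma pd_sum {ι : Type*} (s : Finset ι) {f : ι → EuclideanSpace ℝ (Fin n) → ℝ}
    (hf : ∀ k, Differentiable ℝ (f k)) (i : Fin n) (x : EuclideanSpace ℝ (Fin n)) :
    pd n (fun y => ∑ k ∈ s, f k y) i x = ∑ k ∈ s, pd n (f k) i x := by
  simp only [pd, fderiv_fun_sum (fun k _ => (hf k x)), ContinuousLinearMap.sum_apply]

lemma pd_exp {f : EuclideanSpace ℝ (Fin n) → ℝ} (hf : Differentiable ℝ f)
    (i : Fin n) (x : EuclideanSpace ℝ (Fin n)) :
    pd n (fun y => Real.exp (f y)) i x = Real.exp (f x) * pd n f i x := by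
  simp only [pd, fderiv_exp (hf x), ContinuousLinearMap.smul_apply, smul_eq_mul]

lemma pd_const_mul {f : EuclideanSpace ℝ (Fin n) → ℝ} (hf : Differentiable ℝ f)
    (c : ℝ) (i : Fin n) (x : EuclideanSpace ℝ (Fin n)) :
    pd n (fun y => c * f y) i x = c * pd n f i x := by
  simp only [pd, fderiv_const_mul (hf x) c, ContinuousLinearMap.smul_apply, smul_eq_mul]

lemma pd_integrable {f : EuclideanSpace ℝ (Fin n) → ℝ} (hf : ContDiff ℝ 1 f)
    (hc : HasCompactSupport f) (i : Fin n) :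
    Integrable (fun x => pd n f i x) := by
  have hcont : Continuous fun x => pd n f i x :=
    (hf.continuous_fderiv one_ne_zero).clm_apply continuous_const
  have hs : HasCompactSupport fun x => pd n f i x := by
    apply (hc.fderiv ℝ).mono
    intro x hx
    simp only [Function.mem_support] at hx ⊢
    intro h0
    exact hx (by simp [pd, h0])
  exact hcont.integrable_of_hasCompactSupport hs

lemma integral_pd_eq_zero {f : EuclideanSpace ℝ (Fin n) → ℝ} (hf : ContDiff ℝ 1 f)
    (hc : HasCompactSupport f) (i : Fin n) :
    ∫ x, pd n f i x = 0 := by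
  have hdiff : Differentiable ℝ f := hf.differentiable one_ne_zero
  have h1 : Integrable (fun x =>
      (fderiv ℝ (fun _ : EuclideanSpace ℝ (Fin n) => (1:ℝ)) x) (EuclideanSpace.single i 1) * f x) := by
    simpa [fderiv_const] using (integrable_zero (EuclideanSpace ℝ (Fin n)) ℝ volume)
  have h2 : Integrable (fun x =>
      (1:ℝ) * (fderiv ℝ f x) (EuclideanSpace.single i 1)) := by
    simpa [pd] using pd_integrable hf hc i
  have h3 : Integrable (fun x => (1:ℝ) * f x) := by
    simpa using (hf.continuous.integrable_of_hasCompactSupport hc)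
  have := integral_mul_fderiv_eq_neg_fderiv_mul_of_integrable h1 h2 h3
    (fun x _ => (differentiable_const (1:ℝ)) x) (fun x _ => hdiff x)
  simpa [pd, fderiv_const] using this

/-- The auxiliary vector field whose divergence gives the identity. -/
noncomputable def gA (n : ℕ) (u : EuclideanSpace ℝ (Fin n) → ℝ)
    (Y V : EuclideanSpace ℝ (Fin n) → EuclideanSpace ℝ (Fin n))
    (j : Fin n) (x : EuclideanSpace ℝ (Fin n)) : ℝ :=
  Real.exp (2 * u x) * ((∑ k, Y x k * V x k) * Y x j
    + (1/2) * ((∑ k, Y x k * Y x k) * V x j))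

/-- The summand of the double-sum normal form. -/
noncomputable def FA (n : ℕ) (u : EuclideanSpace ℝ (Fin n) → ℝ)
    (Y V : EuclideanSpace ℝ (Fin n) → EuclideanSpace ℝ (Fin n))
    (j k : Fin n) (x : EuclideanSpace ℝ (Fin n)) : ℝ :=
  Real.exp (2 * u x) * (2 * pd n u j x * (Y x k * V x k) * Y x j
    + pd n u j x * (Y x k * Y x k) * V x j
    + vpd n Y j k x * V x k * Y x j
    + Y x k * vpd n V j k x * Y x j
    + Y x k * V x k * vpd n Y j j x
    + Y x k * vpd n Y j k x * V x j
    + (1/2) * (Y x k * Y x k) * vpd n V j j x)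

variable {u : EuclideanSpace ℝ (Fin n) → ℝ}
  {Y V : EuclideanSpace ℝ (Fin n) → EuclideanSpace ℝ (Fin n)}

lemma coord_contDiff (hY : ContDiff ℝ 1 Y) (k : Fin n) :
    ContDiff ℝ 1 (fun x => Y x k) :=
  (EuclideanSpace.proj (𝕜 := ℝ) k).contDiff.comp hY

lemma coord_diff (hY : ContDiff ℝ 1 Y) (k : Fin n) :
    Differentiable ℝ (fun x => Y x k) :=
  (coord_contDiff hY k).differentiable one_ne_zero

lemma gA_contDiff (hu : ContDiff ℝ 1 u) (hY : ContDiff ℝ 1 Y) (hV : ContDiff ℝ 1 V)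
    (j : Fin n) : ContDiff ℝ 1 (gA n u Y V j) := by
  apply ContDiff.mul
  · exact (contDiff_const.mul hu).exp
  · apply ContDiff.add
    · exact (ContDiff.sum fun k _ => (coord_contDiff hY k).mul (coord_contDiff hV k)).mul
        (coord_contDiff hY j)
    · exact contDiff_const.mul
        ((ContDiff.sum fun k _ => (coord_contDiff hY k).mul (coord_contDiff hY k)).mul
          (coord_contDiff hV j))

lemma gA_supp (hsupp : HasCompactSupport Y) (j : Fin n) :
    HasCompactSupport (gA n u Y V j) := by
  apply hsupp.mono
  intro x hx
  simp only [Function.mem_support] at hx ⊢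
  intro h0
  apply hx
  have hz : ∀ k, Y x k = 0 := fun k => by rw [h0]; rfl
  simp [gA, hz]

lemma pd_gA (hu : ContDiff ℝ 1 u) (hY : ContDiff ℝ 1 Y) (hV : ContDiff ℝ 1 V)
    (j : Fin n) (x : EuclideanSpace ℝ (Fin n)) :
    pd n (gA n u Y V j) j x = ∑ k, FA n u Y V j k x := by
  have hud : Differentiable ℝ u := hu.differentiable one_ne_zero
  have ha := coord_diff hY
  have hb := coord_diff hV
  have hS1 : Differentiable ℝ (fun x => ∑ k, Y x k * V x k) :=
    Differentiable.fun_sum (fun k _ => (ha k).fun_mul (hb k))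
  have hS2 : Differentiable ℝ (fun x => ∑ k, Y x k * Y x k) :=
    Differentiable.fun_sum (fun k _ => (ha k).fun_mul (ha k))
  have hE : Differentiable ℝ (fun x => Real.exp (2 * u x)) :=
    ((differentiable_const (2:ℝ)).fun_mul hud).exp
  have hP : Differentiable ℝ (fun x => (∑ k, Y x k * V x k) * Y x j
      + (1/2) * ((∑ k, Y x k * Y x k) * V x j)) :=
    (hS1.fun_mul (ha j)).fun_add ((differentiable_const _).fun_mul (hS2.fun_mul (hb j)))
  have h1 : pd n (fun y => ∑ k, Y y k * V y k) j x
      = ∑ k, (vpd n Y j k x * V x k + Y x k * vpd n V j k x) := by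
    rw [pd_sum Finset.univ (fun k => (ha k).fun_mul (hb k)) j x]
    exact Finset.sum_congr rfl fun k _ => pd_mul (ha k) (hb k) j x
  have h2 : pd n (fun y => ∑ k, Y y k * Y y k) j x
      = ∑ k, (vpd n Y j k x * Y x k + Y x k * vpd n Y j k x) := by
    rw [pd_sum Finset.univ (fun k => (ha k).fun_mul (ha k)) j x]
    exact Finset.sum_congr rfl fun k _ => pd_mul (ha k) (ha k) j x
  have h3 : pd n (fun y => Real.exp (2 * u y)) j x
      = Real.exp (2 * u x) * (2 * pd n u j x) := by
    rw [pd_exp ((differentiable_const (2:ℝ)).fun_mul hud) j x, pd_const_mul hud 2 j x]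
  have key : pd n (gA n u Y V j) j x
      = Real.exp (2 * u x) * (2 * pd n u j x)
          * ((∑ k, Y x k * V x k) * Y x j + (1/2) * ((∑ k, Y x k * Y x k) * V x j))
        + Real.exp (2 * u x)
          * (((∑ k, (vpd n Y j k x * V x k + Y x k * vpd n V j k x)) * Y x j
              + (∑ k, Y x k * V x k) * vpd n Y j j x)
            + (1/2) * ((∑ k, (vpd n Y j k x * Y x k + Y x k * vpd n Y j k x)) * V x j
              + (∑ k, Y x k * Y x k) * vpd n V j j x)) := by
    show pd n (fun y => Real.exp (2 * u y) * ((∑ k, Y y k * V y k) * Y y j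
      + (1/2) * ((∑ k, Y y k * Y y k) * V y j))) j x = _
    rw [pd_mul hE hP j x, h3,
      pd_add (hS1.fun_mul (ha j)) ((differentiable_const _).fun_mul (hS2.fun_mul (hb j))) j x,
      pd_mul hS1 (ha j) j x, pd_const_mul (hS2.fun_mul (hb j)) (1/2) j x,
      pd_mul hS2 (hb j) j x, h1, h2]
    rfl
  rw [key]
  simp only [FA, Finset.mul_sum, Finset.sum_mul, mul_add, add_mul, ← Finset.sum_add_distrib]
  exact Finset.sum_congr rfl fun k _ => by ring

lemma FA_sum (n : ℕ) (u : EuclideanSpace ℝ (Fin n) → ℝ)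
    (Y V : EuclideanSpace ℝ (Fin n) → EuclideanSpace ℝ (Fin n))
    (x : EuclideanSpace ℝ (Fin n)) :
    ∑ j, ∑ k, FA n u Y V j k x
      = 2 * (Real.exp (2 * u x) *
          ∑ i, ∑ j, (symGrad n Y i j x +
            (1/2) * diverg n Y x * (if i = j then (1:ℝ) else 0)) * Y x i * V x j)
        + Real.exp (2 * u x) *
            ((∑ i, ∑ j, Y x i * Y x j * vpd n V i j x) +
              (1/2) * diverg n V x * (∑ i, (Y x i) ^ 2) +
              (∑ i, pd n u i x * V x i) * (∑ i, (Y x i) ^ 2) +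
              2 * (∑ i, pd n u i x * Y x i) * (∑ i, V x i * Y x i)) := by
  have hA : Real.exp (2 * u x) *
        ∑ i, ∑ j, (symGrad n Y i j x +
          (1/2) * diverg n Y x * (if i = j then (1:ℝ) else 0)) * Y x i * V x j
      = (∑ i, ∑ j, Real.exp (2 * u x) * ((1/2) * vpd n Y i j x * Y x i * V x j))
        + ((∑ i, ∑ j, Real.exp (2 * u x) * ((1/2) * vpd n Y j i x * Y x i * V x j))
        + (∑ i, ∑ j, if i = j
            then Real.exp (2 * u x) * ((1/2) * diverg n Y x * Y x i * V x j) else 0)) := by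
    simp only [Finset.mul_sum, ← Finset.sum_add_distrib]
    refine Finset.sum_congr rfl fun i _ => Finset.sum_congr rfl fun j _ => ?_
    by_cases h : i = j
    · simp only [if_pos h, symGrad]; ring
    · simp only [if_neg h, symGrad]; ring
  have hA2 : (∑ i, ∑ j, Real.exp (2 * u x) * ((1/2) * vpd n Y j i x * Y x i * V x j))
      = ∑ j, ∑ i, Real.exp (2 * u x) * ((1/2) * vpd n Y j i x * Y x i * V x j) :=
    Finset.sum_comm
  have hA3 : (∑ i, ∑ j, if i = j
        then Real.exp (2 * u x) * ((1/2) * diverg n Y x * Y x i * V x j) else 0)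
      = ∑ m, ∑ i, Real.exp (2 * u x) * ((1/2) * vpd n Y m m x * Y x i * V x i) := by
    calc (∑ i, ∑ j, if i = j
        then Real.exp (2 * u x) * ((1/2) * diverg n Y x * Y x i * V x j) else 0)
        = ∑ i, Real.exp (2 * u x) * ((1/2) * diverg n Y x * Y x i * V x i) := by
          refine Finset.sum_congr rfl fun i _ => ?_
          simp
      _ = ∑ i, ∑ m, Real.exp (2 * u x) * ((1/2) * vpd n Y m m x * Y x i * V x i) := by
          refine Finset.sum_congr rfl fun i _ => ?_
          simp only [diverg, Finset.mul_sum, Finset.sum_mul]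
      _ = ∑ m, ∑ i, Real.exp (2 * u x) * ((1/2) * vpd n Y m m x * Y x i * V x i) :=
          Finset.sum_comm
  have hB : Real.exp (2 * u x) *
        ((∑ i, ∑ j, Y x i * Y x j * vpd n V i j x) +
          (1/2) * diverg n V x * (∑ i, (Y x i) ^ 2) +
          (∑ i, pd n u i x * V x i) * (∑ i, (Y x i) ^ 2) +
          2 * (∑ i, pd n u i x * Y x i) * (∑ i, V x i * Y x i))
      = (∑ i, ∑ j, Real.exp (2 * u x) * (Y x i * Y x j * vpd n V i j x))
        + ((∑ i, ∑ j, Real.exp (2 * u x) * ((1/2) * vpd n V j j x * (Y x i) ^ 2))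
        + ((∑ i, ∑ j, Real.exp (2 * u x) * (pd n u j x * V x j * (Y x i) ^ 2))
        + (∑ i, ∑ j, Real.exp (2 * u x) * (2 * pd n u j x * Y x j * (V x i * Y x i))))) := by
    simp only [diverg, mul_add, Finset.mul_sum, Finset.sum_mul, ← Finset.sum_add_distrib]
    refine Finset.sum_congr rfl fun i _ => Finset.sum_congr rfl fun j _ => by ring
  have hB2 : (∑ i, ∑ j, Real.exp (2 * u x) * ((1/2) * vpd n V j j x * (Y x i) ^ 2))
      = ∑ j, ∑ i, Real.exp (2 * u x) * ((1/2) * vpd n V j j x * (Y x i) ^ 2) :=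
    Finset.sum_comm
  have hB3 : (∑ i, ∑ j, Real.exp (2 * u x) * (pd n u j x * V x j * (Y x i) ^ 2))
      = ∑ j, ∑ i, Real.exp (2 * u x) * (pd n u j x * V x j * (Y x i) ^ 2) :=
    Finset.sum_comm
  have hB4 : (∑ i, ∑ j, Real.exp (2 * u x) * (2 * pd n u j x * Y x j * (V x i * Y x i)))
      = ∑ j, ∑ i, Real.exp (2 * u x) * (2 * pd n u j x * Y x j * (V x i * Y x i)) :=
    Finset.sum_comm
  rw [hA, hA2, hA3, hB, hB2, hB3, hB4]
  simp only [mul_add, Finset.mul_sum, ← Finset.sum_add_distrib]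
  refine Finset.sum_congr rfl fun j _ => Finset.sum_congr rfl fun k _ => ?_
  simp only [FA]
  ring

end KillingAux

/-- Flat-case exponentially weighted integration-by-parts identity for the
Killing operator. -/
theorem killing_operator_identity_weighted (n : ℕ) (hn : 1 ≤ n)
    (u : EuclideanSpace ℝ (Fin n) → ℝ)
    (Y V : EuclideanSpace ℝ (Fin n) → EuclideanSpace ℝ (Fin n))
    (hu : ContDiff ℝ 1 u) (hY : ContDiff ℝ 1 Y) (hV : ContDiff ℝ 1 V)
    (hsupp : HasCompactSupport Y) :
    ∫ x : EuclideanSpace ℝ (Fin n),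
        Real.exp (2 * u x) *
          ∑ i, ∑ j, (symGrad n Y i j x +
            (1/2) * diverg n Y x * (if i = j then (1:ℝ) else 0)) * Y x i * V x j
      = -(1/2) * ∫ x : EuclideanSpace ℝ (Fin n),
          Real.exp (2 * u x) *
            ((∑ i, ∑ j, Y x i * Y x j * vpd n V i j x) +
              (1/2) * diverg n V x * (∑ i, (Y x i) ^ 2) +
              (∑ i, pd n u i x * V x i) * (∑ i, (Y x i) ^ 2) +
              2 * (∑ i, pd n u i x * Y x i) * (∑ i, V x i * Y x i)) := by
  classical
  have haC : ∀ k, Continuous fun x => Y x k := fun k => (KillingAux.coord_contDiff hY k).continuous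
  have hbC : ∀ k, Continuous fun x => V x k := fun k => (KillingAux.coord_contDiff hV k).continuous
  have hvY : ∀ i j : Fin n, Continuous fun x => vpd n Y i j x := fun i j =>
    ((KillingAux.coord_contDiff hY j).continuous_fderiv one_ne_zero).clm_apply continuous_const
  have hvV : ∀ i j : Fin n, Continuous fun x => vpd n V i j x := fun i j =>
    ((KillingAux.coord_contDiff hV j).continuous_fderiv one_ne_zero).clm_apply continuous_const
  have hpu : ∀ i : Fin n, Continuous fun x => pd n u i x := fun i =>
    (hu.continuous_fderiv one_ne_zero).clm_apply continuous_const
  have hexpC : Continuous fun x : EuclideanSpace ℝ (Fin n) => Real.exp (2 * u x) :=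
    Real.continuous_exp.comp (continuous_const.mul hu.continuous)
  set A : EuclideanSpace ℝ (Fin n) → ℝ := fun x =>
    Real.exp (2 * u x) *
      ∑ i, ∑ j, (symGrad n Y i j x +
        (1/2) * diverg n Y x * (if i = j then (1:ℝ) else 0)) * Y x i * V x j with hAdef
  set B : EuclideanSpace ℝ (Fin n) → ℝ := fun x =>
    Real.exp (2 * u x) *
      ((∑ i, ∑ j, Y x i * Y x j * vpd n V i j x) +
        (1/2) * diverg n V x * (∑ i, (Y x i) ^ 2) +
        (∑ i, pd n u i x * V x i) * (∑ i, (Y x i) ^ 2) +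
        2 * (∑ i, pd n u i x * Y x i) * (∑ i, V x i * Y x i)) with hBdef
  have hAcont : Continuous A := by
    apply hexpC.mul
    apply continuous_finset_sum; intro i _
    apply continuous_finset_sum; intro j _
    exact (((((hvY i j).add (hvY j i)).div_const 2).add
      ((continuous_const.mul (continuous_finset_sum _ fun m _ => hvY m m)).mul
        continuous_const)).mul (haC i)).mul (hbC j)
  have hBcont : Continuous B := by
    apply hexpC.mul
    refine (((?_ : Continuous _).add ?_).add ?_).add ?_
    · exact continuous_finset_sum _ fun i _ => continuous_finset_sum _ fun j _ =>
        ((haC i).mul (haC j)).mul (hvV i j)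
    · exact (continuous_const.mul (continuous_finset_sum _ fun m _ => hvV m m)).mul
        (continuous_finset_sum _ fun i _ => (haC i).pow 2)
    · exact (continuous_finset_sum _ fun i _ => (hpu i).mul (hbC i)).mul
        (continuous_finset_sum _ fun i _ => (haC i).pow 2)
    · exact (continuous_const.mul (continuous_finset_sum _ fun i _ => (hpu i).mul (haC i))).mul
        (continuous_finset_sum _ fun i _ => (hbC i).mul (haC i))
  have hAsupp : HasCompactSupport A := by
    apply hsupp.mono
    intro x hx
    simp only [Function.mem_support] at hx ⊢
    intro h0
    apply hx
    have hz : ∀ k, Y x k = 0 := fun k => by rw [h0]; rfl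
    simp [hAdef, hz]
  have hBsupp : HasCompactSupport B := by
    apply hsupp.mono
    intro x hx
    simp only [Function.mem_support] at hx ⊢
    intro h0
    apply hx
    have hz : ∀ k, Y x k = 0 := fun k => by rw [h0]; rfl
    simp [hBdef, hz]
  have hAint : Integrable A := hAcont.integrable_of_hasCompactSupport hAsupp
  have hBint : Integrable B := hBcont.integrable_of_hasCompactSupport hBsupp
  have hgi : ∀ j : Fin n, Integrable (fun x => pd n (KillingAux.gA n u Y V j) j x) := fun j =>
    KillingAux.pd_integrable (KillingAux.gA_contDiff hu hY hV j) (KillingAux.gA_supp hsupp j) j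
  have hzero : ∫ x, ∑ j, pd n (KillingAux.gA n u Y V j) j x = 0 := by
    rw [integral_finset_sum _ (fun j _ => hgi j)]
    exact Finset.sum_eq_zero fun j _ =>
      KillingAux.integral_pd_eq_zero (KillingAux.gA_contDiff hu hY hV j)
        (KillingAux.gA_supp hsupp j) j
  have hpoint : ∀ x, ∑ j, pd n (KillingAux.gA n u Y V j) j x = 2 * A x + B x := by
    intro x
    calc ∑ j, pd n (KillingAux.gA n u Y V j) j x
        = ∑ j, ∑ k, KillingAux.FA n u Y V j k x :=
          Finset.sum_congr rfl fun j _ => KillingAux.pd_gA hu hY hV j x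
      _ = 2 * A x + B x := by
          simp only [hAdef, hBdef]
          exact KillingAux.FA_sum n u Y V x
  have h2 : ∫ x, (2 * A x + B x) = 0 := by
    rw [← hzero]
    exact integral_congr_ae (Filter.Eventually.of_forall fun x => (hpoint x).symm)
  rw [integral_add (hAint.const_mul 2) hBint, MeasureTheory.integral_const_mul 2 A] at h2
  have hgoal : ∫ x, A x = -(1/2) * ∫ x, B x := by linarith
  exact hgoal
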